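/- Let T ≥ 1, let 𝒳_0, …, 𝒳_T be nonempty finite sets, for each t ∈ {1,…,T} let P_t : 𝒳_t × 𝒳_{t−1} → ℝ be a Markov kernel. Let α > 0 and r : 𝒳_0 → ℝ, and define value functions v_0(x) = exp(r(x)/α) and v_t(x) = Σ_{y∈𝒳_{t−1}} P_t(x,y)·v_{t−1}(y) for t = 1,…,T, and optimal kernels P*_t(x,y) = P_t(x,y)·v_{t−1}(y)/v_t(x). Then for every trajectory (x_T, x_{T−1}, …, x_0) ∈ 𝒳_T × ⋯ × 𝒳_0, the product telescopes: ∏_{t=1}^{T} P*_t(x_t, x_{t−1}) = (∏_{t=1}^{T} P_t(x_t, x_{t−1})) · exp(r(x_0)/α) / v_T(x_T). Consequently, if p_T is a probability distribution on 𝒳_T and Z_T = Σ_{x∈𝒳_T} p_T(x)·v_T(x), the trajectory distribution started from p*_T(x) = p_T(x)·v_T(x)/Z_T under the optimal kernels equals the base trajectory distribution p_T(x_T)·∏_{t=1}^{T} P_t(x_t, x_{t−1}) reweighted by exp(r(x_0)/α)/Z_T. -/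

import Mathlib

lemma telescope_prod (n : ℕ) (f : ℕ → ℝ) (hf : ∀ i ≤ n, f i ≠ 0) :
    ∏ i ∈ Finset.range n, f i / f (i + 1) = f 0 / f n := by
  induction n with
  | zero => rw [Finset.prod_range_zero, div_self (hf 0 le_rfl)]
  | succ n ih =>
    rw [Finset.prod_range_succ, ih (fun i hi => hf i (hi.trans n.le_succ)),
      ← mul_div_assoc, div_mul_cancel₀ _ (hf n (by omega))]

/-- With kernels `P t : X (t+1) → X t → ℝ` (`t = 0,…,T-1`), value functions
`v 0 = exp(r/α)`, `v (t+1) x = Σ_y P t x y · v t y`, and optimal kernels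
`P*_t(x,y) = P t x y · v t y / v (t+1) x`, the product of the optimal kernels along any
trajectory telescopes:
`∏_t P*_t(x_t, x_{t-1}) = (∏_t P_t(x_t, x_{t-1})) · exp(r(x₀)/α) / v T (x_T)`.
Consequently, the trajectory distribution started from `p*_T(x) = p T x · v T x / Z T`
under the optimal kernels equals the base trajectory distribution reweighted by
`exp(r(x₀)/α)/Z_T`. -/
theorem optimal_kernel_trajectory_telescoping
    (T : ℕ) (hT : 1 ≤ T) (X : ℕ → Type*) [∀ t, Fintype (X t)] [∀ t, Nonempty (X t)]
    (P : ∀ t, X (t + 1) → X t → ℝ)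
    (hP_nonneg : ∀ t, t < T → ∀ x y, 0 ≤ P t x y)
    (hP_sum : ∀ t, t < T → ∀ x, ∑ y, P t x y = 1)
    (α : ℝ) (hα : 0 < α) (r : X 0 → ℝ)
    (v : ∀ t, X t → ℝ)
    (hv0 : ∀ x, v 0 x = Real.exp (r x / α))
    (hv_rec : ∀ t, t < T → ∀ x, v (t + 1) x = ∑ y, P t x y * v t y)
    (pT : X T → ℝ) (hpT_nonneg : ∀ x, 0 ≤ pT x) (hpT_sum : ∑ x, pT x = 1) :
    ∀ g : (t : Fin (T + 1)) → X t,
      (∏ t : Fin T,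
          P t (g t.succ) (g t.castSucc) * v t (g t.castSucc) / v (t + 1) (g t.succ))
        = (∏ t : Fin T, P t (g t.succ) (g t.castSucc)) *
            Real.exp (r (g ⟨0, Nat.succ_pos T⟩) / α) / v T (g (Fin.last T))
      ∧ (pT (g (Fin.last T)) * v T (g (Fin.last T)) / (∑ x, pT x * v T x) *
            ∏ t : Fin T,
              P t (g t.succ) (g t.castSucc) * v t (g t.castSucc) / v (t + 1) (g t.succ))
          = (pT (g (Fin.last T)) * ∏ t : Fin T, P t (g t.succ) (g t.castSucc)) *
              (Real.exp (r (g ⟨0, Nat.succ_pos T⟩) / α) / ∑ x, pT x * v T x) := by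
  -- positivity of value functions
  have hv_pos : ∀ t, t ≤ T → ∀ x, 0 < v t x := by
    intro t
    induction t with
    | zero => intro _ x; rw [hv0]; exact Real.exp_pos _
    | succ t ih =>
      intro ht x
      have ht' : t < T := by omega
      rw [hv_rec t ht' x]
      have hex : ∃ y, 0 < P t x y := by
        by_contra h
        push_neg at h
        have : ∑ y, P t x y = 0 := Finset.sum_eq_zero fun y _ =>
          le_antisymm (h y) (hP_nonneg t ht' x y)
        rw [hP_sum t ht' x] at this; norm_num at this
      obtain ⟨y, hy⟩ := hex
      refine Finset.sum_pos' (fun z _ => mul_nonneg (hP_nonneg t ht' x z)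
        (ih (by omega) z).le) ⟨y, Finset.mem_univ y, mul_pos hy (ih (by omega) y)⟩
  intro g
  have hvT := hv_pos T le_rfl (g (Fin.last T))
  -- telescoping
  have key : (∏ t : Fin T,
      P t (g t.succ) (g t.castSucc) * v t (g t.castSucc) / v (t + 1) (g t.succ))
      = (∏ t : Fin T, P t (g t.succ) (g t.castSucc)) *
          Real.exp (r (g ⟨0, Nat.succ_pos T⟩) / α) / v T (g (Fin.last T)) := by
    have split : ∀ t : Fin T,
        P t (g t.succ) (g t.castSucc) * v t (g t.castSucc) / v (t + 1) (g t.succ)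
        = P t (g t.succ) (g t.castSucc) *
            (v t (g t.castSucc) / v (t + 1) (g t.succ)) := fun t => mul_div_assoc _ _ _
    rw [Finset.prod_congr rfl (fun t _ => split t), Finset.prod_mul_distrib,
      mul_div_assoc]
    congr 1
    -- telescoping of the v-ratios
    have hlt : ∀ i, i ≤ T → i < T + 1 := by omega
    set f : ℕ → ℝ := fun i => if h : i < T + 1 then v i (g ⟨i, h⟩) else 1 with hfdef
    have h1 : ∀ t : Fin T, v ↑t (g t.castSucc) / v ((t : ℕ) + 1) (g t.succ)
        = f ↑t / f (↑t + 1) := by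
      intro t
      simp only [hfdef]
      rw [dif_pos (hlt _ (by omega)), dif_pos (hlt _ (by omega))]
      rfl
    have hfne : ∀ i ≤ T, f i ≠ 0 := by
      intro i hi
      simp only [hfdef, dif_pos (hlt i hi)]
      exact (hv_pos i hi _).ne'
    rw [Finset.prod_congr rfl (fun t _ => h1 t),
      Fin.prod_univ_eq_prod_range (fun i => f i / f (i + 1)) T,
      telescope_prod T f hfne]
    simp only [hfdef, dif_pos (hlt 0 (by omega)), dif_pos (hlt T le_rfl)]
    rw [hv0]
    rfl
  refine ⟨key, ?_⟩
  rw [key]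
  set E := Real.exp (r (g ⟨0, Nat.succ_pos T⟩) / α) with hE
  set V := v T (g (Fin.last T)) with hV
  set Z := (∑ x, pT x * v T x) with hZ
  set a := pT (g (Fin.last T)) with ha
  set Q := ∏ t : Fin T, P t (g t.succ) (g t.castSucc) with hQ
  rw [show a * V / Z * (Q * E / V) = V / V * (a * Q * (E / Z)) from by ring,
    div_self hvT.ne', one_mul]
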